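/- (Symmetry of the multiplier response matrix, eq. (21)) Let D ⊆ ℝᴹ be open, let F : ℝⁿ → ℝ and c : ℝⁿ → ℝᴹ be continuously differentiable, let v* : D → ℝⁿ be continuously differentiable with c(v*(x)) = x for all x ∈ D, and let Λ : D → ℝᴹ be continuously differentiable and satisfy ∇F(v*(x)) = Σₘ Λₘ(x)·∇cᵐ(v*(x)) for all x ∈ D. Then for all x ∈ D and all indices i, j: ∂Λᵢ/∂xʲ(x) = ∂Λⱼ/∂xⁱ(x); i.e., the matrix ∂Λᵢ/∂xʲ is symmetric. -/

import Mathlib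

/-- Symmetry of the multiplier response matrix, eq. (21): in the setting of
`max F(v)` s.t. `c(v) = x`, if moreover the multipliers `Λ` are continuously differentiable
on `D`, then the multiplier response matrix is symmetric: `∂Λᵢ/∂xʲ = ∂Λⱼ/∂xⁱ` on `D`. -/
theorem stmt_5 (n M : ℕ) (D : Set (Fin M → ℝ)) (hD : IsOpen D)
    (F : (Fin n → ℝ) → ℝ) (hF : ContDiff ℝ 1 F)
    (c : (Fin n → ℝ) → (Fin M → ℝ)) (hc : ContDiff ℝ 1 c)
    (vstar : (Fin M → ℝ) → (Fin n → ℝ)) (hv : ContDiffOn ℝ 1 vstar D)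
    (Λ : (Fin M → ℝ) → (Fin M → ℝ)) (hΛ : ContDiffOn ℝ 1 Λ D)
    (hcon : ∀ x ∈ D, c (vstar x) = x)
    (hFOC : ∀ x ∈ D, fderiv ℝ F (vstar x)
        = ∑ m, Λ x m • fderiv ℝ (fun v => c v m) (vstar x)) :
    ∀ x ∈ D, ∀ i j : Fin M,
      fderiv ℝ (fun y => Λ y i) x (Pi.single j 1)
        = fderiv ℝ (fun y => Λ y j) x (Pi.single i 1) := by
  intro x hx i j
  -- the candidate derivative of `G = F ∘ vstar` on `D`
  set f' : (Fin M → ℝ) → ((Fin M → ℝ) →L[ℝ] ℝ) :=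
    fun y => ∑ m, Λ y m • (ContinuousLinearMap.proj m : (Fin M → ℝ) →L[ℝ] ℝ) with hf'def
  -- `f' y` evaluated at a basis vector gives `Λ y`
  have heval : ∀ y (k : Fin M), f' y (Pi.single k 1) = Λ y k := by
    intro y k
    simp only [hf'def, ContinuousLinearMap.sum_apply, ContinuousLinearMap.smul_apply,
      ContinuousLinearMap.proj_apply, Pi.single_apply, smul_eq_mul, mul_ite, mul_one, mul_zero]
    simp
  -- differentiability facts
  have hvd : ∀ y ∈ D, HasFDerivAt vstar (fderiv ℝ vstar y) y := by
    intro y hy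
    exact (((hv.differentiableOn one_ne_zero) y hy).differentiableAt (hD.mem_nhds hy)).hasFDerivAt
  -- `f'` is the derivative of `G` on `D`
  have hG : ∀ y ∈ D, HasFDerivAt (fun z => F (vstar z)) (f' y) y := by
    intro y hy
    have hFd : HasFDerivAt F (fderiv ℝ F (vstar y)) (vstar y) :=
      ((hF.differentiable one_ne_zero) (vstar y)).hasFDerivAt
    have hcomp := hFd.comp y (hvd y hy)
    have hkey : (fderiv ℝ F (vstar y)).comp (fderiv ℝ vstar y) = f' y := by
      rw [hFOC y hy]
      rw [ContinuousLinearMap.finset_sum_comp]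
      refine Finset.sum_congr rfl fun m _ => ?_
      rw [ContinuousLinearMap.smul_comp]
      congr 1
      -- chain rule for `z ↦ c (vstar z) m`
      have hcm : HasFDerivAt (fun v => c v m) (fderiv ℝ (fun v => c v m) (vstar y)) (vstar y) := by
        have hdc : Differentiable ℝ (fun v => c v m) :=
          (ContinuousLinearMap.proj m : (Fin M → ℝ) →L[ℝ] ℝ).differentiable.comp
            (hc.differentiable one_ne_zero)
        exact (hdc (vstar y)).hasFDerivAt
      have hchain := hcm.comp y (hvd y hy)
      -- but `z ↦ c (vstar z) m` equals `z ↦ z m` near `y`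
      have hEq : (fun z => c (vstar z) m) =ᶠ[nhds y] (fun z => z m) := by
        filter_upwards [hD.mem_nhds hy] with z hz
        rw [hcon z hz]
      have h1 : (fderiv ℝ (fun v => c v m) (vstar y)).comp (fderiv ℝ vstar y)
          = fderiv ℝ (fun z => c (vstar z) m) y := (hchain.fderiv).symm
      rw [h1, hEq.fderiv_eq]
      exact (ContinuousLinearMap.proj m : (Fin M → ℝ) →L[ℝ] ℝ).fderiv
    rw [← hkey]
    exact hcomp
  -- `f'` is differentiable at `x`
  have hΛd : ∀ k : Fin M, DifferentiableAt ℝ (fun y => Λ y k) x := by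
    intro k
    have hΛx : DifferentiableAt ℝ Λ x :=
      ((hΛ.differentiableOn one_ne_zero) x hx).differentiableAt (hD.mem_nhds hx)
    exact (ContinuousLinearMap.proj k : (Fin M → ℝ) →L[ℝ] ℝ).differentiableAt.comp x hΛx
  have hf'd : DifferentiableAt ℝ f' x := by
    refine DifferentiableAt.fun_sum fun m _ => ?_
    exact (hΛd m).smul_const _
  have hf'' : HasFDerivAt f' (fderiv ℝ f' x) x := hf'd.hasFDerivAt
  have hsymm := second_derivative_symmetric_of_eventually
    (f := fun z => F (vstar z))
    (by filter_upwards [hD.mem_nhds hx] with y hy using hG y hy) hf''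
  have hfd : ∀ k : Fin M,
      fderiv ℝ (fun y => Λ y k) x
        = (ContinuousLinearMap.apply ℝ ℝ (Pi.single k 1)).comp (fderiv ℝ f' x) := by
    intro k
    have hfun : (fun y => Λ y k) = fun y => f' y (Pi.single k 1) := by
      funext y; exact (heval y k).symm
    rw [hfun]
    exact ((ContinuousLinearMap.apply ℝ ℝ (Pi.single k 1)).hasFDerivAt.comp x hf'').fderiv
  rw [hfd i, hfd j]
  exact hsymm (Pi.single j 1) (Pi.single i 1)
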